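/- Under the same setting, if additionally f is L_f-smooth, then E‖(1/n)∑_{τ=1}^n (∇f_{i_k^τ}^{(τ)}(x^k) − ∇f_{i_k^τ}^{(τ)}(w^k))‖² ≤ 4(L_f + L/n)[P(x^k) − P(x*)] + 4(L_f + L/n)[P(w^k) − P(x*)], where the indices i_k^τ are sampled uniformly and independently from [m] for each τ. -/

import Mathlib

open Finset
open scoped InnerProductSpace

section myHelpers
open Filter
open scoped Topology
variable {H : Type*} [NormedAddCommGroup H] [InnerProductSpace ℝ H] [CompleteSpace H]

private lemma hasDerivAt_line' (f : H → ℝ) (gf : H → H) (hg : ∀ x, HasGradientAt f (gf x) x)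
    (a v : H) (t : ℝ) :
    HasDerivAt (fun s : ℝ => f (a + s • v)) ⟪gf (a + t • v), v⟫_ℝ t := by
  have hc : HasDerivAt (fun s : ℝ => a + s • v) v t := by
    simpa using ((hasDerivAt_id t).smul_const v).const_add a
  have := (hasGradientAt_iff_hasFDerivAt.mp (hg (a + t • v))).comp_hasDerivAt t hc
  simpa [Function.comp_def] using this

private lemma convex_lower' (f : H → ℝ) (gf : H → H) (hconv : ConvexOn ℝ Set.univ f)
    (hg : ∀ x, HasGradientAt f (gf x) x) (x y : H) :
    f x + ⟪gf x, y - x⟫_ℝ ≤ f y := by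
  have hφ : ConvexOn ℝ Set.univ (fun t : ℝ => f (x + t • (y - x))) := by
    have h := hconv.comp_affineMap (AffineMap.lineMap x y : ℝ →ᵃ[ℝ] H)
    have h2 : ConvexOn ℝ Set.univ (f ∘ ⇑(AffineMap.lineMap x y)) :=
      h.subset (by simp) convex_univ
    have : (f ∘ ⇑(AffineMap.lineMap x y)) = fun t : ℝ => f (x + t • (y - x)) := by
      funext t; simp [AffineMap.lineMap_apply_module', add_comm]
    rwa [this] at h2
  have hder : HasDerivAt (fun t : ℝ => f (x + t • (y - x))) ⟪gf x, y - x⟫_ℝ 0 := by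
    simpa using hasDerivAt_line' f gf hg x (y - x) 0
  have hslope := hφ.le_slope_of_hasDerivAt (Set.mem_univ 0) (Set.mem_univ 1) one_pos hder
  simp only [slope_def_field] at hslope
  have h0 : x + (0:ℝ) • (y - x) = x := by simp
  have h1 : x + (1:ℝ) • (y - x) = y := by simp
  rw [h0, h1] at hslope
  norm_num at hslope
  linarith

private lemma descent_lemma' (f : H → ℝ) (gf : H → H) (L : ℝ) (hL : 0 ≤ L)
    (hg : ∀ x, HasGradientAt f (gf x) x) (hlip : LipschitzWith (Real.toNNReal L) gf)
    (a v : H) : f (a + v) ≤ f a + ⟪gf a, v⟫_ℝ + L / 2 * ‖v‖ ^ 2 := by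
  set φ : ℝ → ℝ := fun s => f a + s * ⟪gf a, v⟫_ℝ + L / 2 * s ^ 2 * ‖v‖ ^ 2 - f (a + s • v)
    with hφdef
  have hder : ∀ t : ℝ, HasDerivAt φ
      (⟪gf a, v⟫_ℝ + L / 2 * (2 * t) * ‖v‖ ^ 2 - ⟪gf (a + t • v), v⟫_ℝ) t := by
    intro t
    have h1 : HasDerivAt (fun s : ℝ => f a + s * ⟪gf a, v⟫_ℝ + L / 2 * s ^ 2 * ‖v‖ ^ 2)
        (⟪gf a, v⟫_ℝ + L / 2 * (2 * t) * ‖v‖ ^ 2) t := by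
      have hA : HasDerivAt (fun s : ℝ => s * ⟪gf a, v⟫_ℝ) ⟪gf a, v⟫_ℝ t := by
        simpa using (hasDerivAt_id t).mul_const ⟪gf a, v⟫_ℝ
      have hB : HasDerivAt (fun s : ℝ => L / 2 * s ^ 2 * ‖v‖ ^ 2)
          (L / 2 * (2 * t) * ‖v‖ ^ 2) t := by
        simpa using ((hasDerivAt_pow 2 t).const_mul (L / 2)).mul_const (‖v‖ ^ 2)
      exact (hA.const_add (f a)).add hB
    exact h1.sub (hasDerivAt_line' f gf hg a v t)
  have hmono : MonotoneOn φ (Set.Icc (0:ℝ) 1) := by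
    apply monotoneOn_of_deriv_nonneg (convex_Icc 0 1)
    · have : Differentiable ℝ φ := fun t => (hder t).differentiableAt
      exact this.continuous.continuousOn
    · intro t _; exact (hder t).differentiableAt.differentiableWithinAt
    · intro t ht
      rw [(hder t).deriv]
      simp only [interior_Icc, Set.mem_Ioo] at ht
      have hlipb : ‖gf (a + t • v) - gf a‖ ≤ L * (t * ‖v‖) := by
        have := hlip.dist_le_mul (a + t • v) a
        rw [dist_eq_norm, Real.coe_toNNReal L hL] at this
        simpa [norm_smul, abs_of_pos ht.1, mul_assoc] using this
      have hinner : ⟪gf (a + t • v) - gf a, v⟫_ℝ ≤ L * t * ‖v‖ ^ 2 := by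
        calc ⟪gf (a + t • v) - gf a, v⟫_ℝ ≤ ‖gf (a + t • v) - gf a‖ * ‖v‖ :=
              real_inner_le_norm _ _
          _ ≤ L * (t * ‖v‖) * ‖v‖ := by
              apply mul_le_mul_of_nonneg_right hlipb (norm_nonneg _)
          _ = L * t * ‖v‖ ^ 2 := by ring
      have : ⟪gf (a + t • v), v⟫_ℝ - ⟪gf a, v⟫_ℝ ≤ L * t * ‖v‖ ^ 2 := by
        rw [← inner_sub_left]; exact hinner
      nlinarith
  have h01 : φ 0 ≤ φ 1 := hmono (by norm_num) (by norm_num) zero_le_one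
  simp only [hφdef] at h01
  norm_num at h01
  linarith [h01]

private lemma cocoercive' (f : H → ℝ) (gf : H → H) (L : ℝ) (hL : 0 < L)
    (hconv : ConvexOn ℝ Set.univ f) (hg : ∀ x, HasGradientAt f (gf x) x)
    (hlip : LipschitzWith (Real.toNNReal L) gf) (x y : H) :
    ‖gf x - gf y‖ ^ 2 ≤ 2 * L * (f x - f y - ⟪gf y, x - y⟫_ℝ) := by
  set u := gf x - gf y with hu
  set v := -((1/L) • u) with hv
  have hdesc := descent_lemma' f gf L hL.le hg hlip x v
  have hlow := convex_lower' f gf hconv hg y (x + v)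
  have e1 : ⟪gf y, x + v - y⟫_ℝ = ⟪gf y, x - y⟫_ℝ - (1/L) * ⟪gf y, u⟫_ℝ := by
    have : x + v - y = (x - y) - (1/L) • u := by rw [hv]; abel
    rw [this, inner_sub_right, real_inner_smul_right]
  have e2 : ⟪gf x, v⟫_ℝ = -((1/L) * ⟪gf x, u⟫_ℝ) := by
    rw [hv, inner_neg_right, real_inner_smul_right]
  have e3 : ‖v‖ ^ 2 = (1/L)^2 * ‖u‖ ^ 2 := by
    rw [hv, norm_neg, norm_smul]
    rw [Real.norm_eq_abs, abs_of_pos (by positivity)]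
    ring
  have e4 : ⟪gf x, u⟫_ℝ - ⟪gf y, u⟫_ℝ = ‖u‖ ^ 2 := by
    rw [← inner_sub_left, ← hu, real_inner_self_eq_norm_sq]
  have c1 : (1/L) * ⟪gf x, u⟫_ℝ - (1/L) * ⟪gf y, u⟫_ℝ ≤
      f x - f y - ⟪gf y, x - y⟫_ℝ + L/2 * ((1/L)^2 * ‖u‖^2) := by
    rw [e1] at hlow; rw [e2, e3] at hdesc; linarith
  have c2 : (1/L) * ‖u‖^2 ≤ f x - f y - ⟪gf y, x - y⟫_ℝ + L/2 * ((1/L)^2 * ‖u‖^2) := by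
    calc (1/L) * ‖u‖^2 = (1/L) * ⟪gf x, u⟫_ℝ - (1/L) * ⟪gf y, u⟫_ℝ := by rw [← e4]; ring
      _ ≤ _ := c1
  have hid : L/2 * ((1/L)^2 * ‖u‖^2) = 1/(2*L) * ‖u‖^2 := by
    field_simp
  have c3 : 1/(2*L) * ‖u‖^2 ≤ f x - f y - ⟪gf y, x - y⟫_ℝ := by
    rw [hid] at c2
    have : (1/L) * ‖u‖^2 - 1/(2*L) * ‖u‖^2 = 1/(2*L) * ‖u‖^2 := by field_simp; ring
    linarith
  have := mul_le_mul_of_nonneg_left c3 (by positivity : (0:ℝ) ≤ 2*L)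
  have hfin : 2*L * (1/(2*L) * ‖u‖^2) = ‖u‖^2 := by field_simp
  linarith [this, hfin.symm.le]

private lemma opt_ineq' (F ψ : H → ℝ) (gF : H → H) (hgF : ∀ x, HasGradientAt F (gF x) x)
    (hψ : ConvexOn ℝ Set.univ ψ) (z : H)
    (hmin : ∀ y, F z + ψ z ≤ F y + ψ y) (y : H) :
    0 ≤ ⟪gF z, y - z⟫_ℝ + ψ y - ψ z := by
  set φ : ℝ → ℝ := fun t => F (z + t • (y - z)) with hφ
  have hder : HasDerivAt φ ⟪gF z, y - z⟫_ℝ 0 := by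
    simpa using hasDerivAt_line' F gF hgF z (y - z) 0
  have hslope : Tendsto (slope φ 0) (𝓝[>] 0) (𝓝 ⟪gF z, y - z⟫_ℝ) :=
    (hasDerivAt_iff_tendsto_slope.mp hder).mono_left
      (nhdsWithin_mono 0 (fun t ht => ne_of_gt ht))
  have hev : ∀ᶠ t in 𝓝[>] (0:ℝ), ψ z - ψ y ≤ slope φ 0 t := by
    have hIoo : Set.Ioo (0:ℝ) 1 ∈ 𝓝[>] (0:ℝ) :=
      Ioo_mem_nhdsGT_of_mem (by norm_num : (0:ℝ) ∈ Set.Ico (0:ℝ) 1)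
    filter_upwards [hIoo] with t ht
    have hct : z + t • (y - z) = (1 - t) • z + t • y := by
      rw [sub_smul, one_smul, smul_sub]; abel
    have hψct : ψ (z + t • (y - z)) ≤ (1 - t) * ψ z + t * ψ y := by
      rw [hct]
      exact hψ.2 (Set.mem_univ z) (Set.mem_univ y) (by linarith [ht.2]) ht.1.le (by ring)
    have hm := hmin (z + t • (y - z))
    have key : t * (ψ z - ψ y) ≤ φ t - φ 0 := by
      simp only [hφ]
      have : φ 0 = F z := by simp [hφ]
      nlinarith [hψct, hm]
    rw [slope_def_field, sub_zero, le_div_iff₀ ht.1]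
    linarith [key]
  have := ge_of_tendsto hslope hev
  linarith [this]

private lemma convexOn_finset_sum' {ι : Type*} (s : Finset ι) (f : ι → H → ℝ)
    (h : ∀ i ∈ s, ConvexOn ℝ Set.univ (f i)) :
    ConvexOn ℝ Set.univ (fun x => ∑ i ∈ s, f i x) := by
  classical
  induction s using Finset.induction with
  | empty => simpa using convexOn_const (0:ℝ) convex_univ
  | @insert a s ha ih =>
    have h1 : ConvexOn ℝ Set.univ (f a) := h a (Finset.mem_insert_self a s)
    have h2 : ConvexOn ℝ Set.univ (fun x => ∑ i ∈ s, f i x) :=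
      ih fun i hi => h i (Finset.mem_insert_of_mem hi)
    have := h1.add h2
    have e : (fun x => ∑ i ∈ insert a s, f i x) = f a + fun x => ∑ i ∈ s, f i x :=
      funext fun x => by simp [Finset.sum_insert ha]
    rw [e]; exact this

end myHelpers

private lemma sum_fun_eval' {m n : ℕ} (φ : Fin m → ℝ) (τ : Fin n) :
    ∑ σ : Fin n → Fin m, φ (σ τ) = (m:ℝ)^(n-1) * ∑ i, φ i := by
  classical
  set h : Fin n → Fin m → ℝ := fun t i => if t = τ then φ i else 1 with hh
  have h1 : ∀ σ : Fin n → Fin m, φ (σ τ) = ∏ t, h t (σ t) := by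
    intro σ
    rw [Finset.prod_eq_single τ (fun b _ hb => by simp [hh, hb]) (by simp)]
    simp [hh]
  calc ∑ σ : Fin n → Fin m, φ (σ τ)
      = ∑ σ ∈ Fintype.piFinset (fun _ : Fin n => (univ : Finset (Fin m))), ∏ t, h t (σ t) := by
        rw [Fintype.piFinset_univ]; exact Finset.sum_congr rfl (fun σ _ => h1 σ)
    _ = ∏ t, ∑ i, h t i := (Finset.prod_univ_sum _ _).symm
    _ = (m:ℝ)^(n-1) * ∑ i, φ i := by
        rw [← Finset.mul_prod_erase univ _ (mem_univ τ)]
        have : ∀ t ∈ univ.erase τ, ∑ i, h t i = (m:ℝ) := by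
          intro t ht
          simp [hh, Finset.mem_erase.mp ht |>.1]
        rw [Finset.prod_congr rfl this, Finset.prod_const,
          Finset.card_erase_of_mem (mem_univ τ), Finset.card_univ, Fintype.card_fin]
        simp [hh]
        ring

private lemma sum_fun_eval₂' {m n : ℕ} (a b : Fin m → ℝ) (τ τ' : Fin n) (hττ' : τ ≠ τ') :
    ∑ σ : Fin n → Fin m, a (σ τ) * b (σ τ') = (m:ℝ)^(n-2) * ((∑ i, a i) * (∑ j, b j)) := by
  classical
  set h : Fin n → Fin m → ℝ := fun t i => if t = τ then a i else if t = τ' then b i else 1 with hh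
  have h1 : ∀ σ : Fin n → Fin m, a (σ τ) * b (σ τ') = ∏ t, h t (σ t) := by
    intro σ
    rw [← Finset.mul_prod_erase univ _ (mem_univ τ),
      ← Finset.mul_prod_erase _ _ (Finset.mem_erase.mpr ⟨Ne.symm hττ', mem_univ τ'⟩)]
    have hrest : ∀ t ∈ (univ.erase τ).erase τ', h t (σ t) = 1 := by
      intro t ht
      obtain ⟨ht', ht''⟩ := Finset.mem_erase.mp ht
      obtain ⟨htτ, _⟩ := Finset.mem_erase.mp ht''
      simp [hh, htτ, ht']
    rw [Finset.prod_congr rfl hrest, Finset.prod_const_one]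
    simp [hh, Ne.symm hττ', hττ']
  calc ∑ σ : Fin n → Fin m, a (σ τ) * b (σ τ')
      = ∑ σ ∈ Fintype.piFinset (fun _ : Fin n => (univ : Finset (Fin m))), ∏ t, h t (σ t) := by
        rw [Fintype.piFinset_univ]; exact Finset.sum_congr rfl (fun σ _ => h1 σ)
    _ = ∏ t, ∑ i, h t i := (Finset.prod_univ_sum _ _).symm
    _ = (m:ℝ)^(n-2) * ((∑ i, a i) * (∑ j, b j)) := by
        rw [← Finset.mul_prod_erase univ _ (mem_univ τ),
          ← Finset.mul_prod_erase _ _ (Finset.mem_erase.mpr ⟨Ne.symm hττ', mem_univ τ'⟩)]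
        have hrest : ∀ t ∈ (univ.erase τ).erase τ', ∑ i, h t i = (m:ℝ) := by
          intro t ht
          obtain ⟨ht', ht''⟩ := Finset.mem_erase.mp ht
          obtain ⟨htτ, _⟩ := Finset.mem_erase.mp ht''
          simp [hh, htτ, ht']
        rw [Finset.prod_congr rfl hrest, Finset.prod_const,
          Finset.card_erase_of_mem (Finset.mem_erase.mpr ⟨Ne.symm hττ', mem_univ τ'⟩),
          Finset.card_erase_of_mem (mem_univ τ), Finset.card_univ, Fintype.card_fin]
        have e1 : ∑ i, h τ i = ∑ i, a i := by simp [hh]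
        have e2 : ∑ i, h τ' i = ∑ i, b i := by simp [hh, Ne.symm hττ']
        rw [e1, e2]
        have : n - 1 - 1 = n - 2 := by omega
        rw [this]; ring

private lemma exp_sq_sum_bound' {d m n : ℕ} (hm : 0 < m) (hn : 0 < n)
    (v : Fin n → Fin m → EuclideanSpace ℝ (Fin d)) :
    (1 / (m:ℝ)^n) * ∑ σ : Fin n → Fin m, ‖∑ τ, v τ (σ τ)‖^2 ≤
      ‖(1/(m:ℝ)) • ∑ τ, ∑ i, v τ i‖^2 + (1/(m:ℝ)) * ∑ τ, ∑ i, ‖v τ i‖^2 := by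
  classical
  have hmR : (0:ℝ) < m := by exact_mod_cast hm
  set s : Fin n → EuclideanSpace ℝ (Fin d) := fun τ => ∑ i, v τ i with hs
  set Q : ℝ := ∑ τ, ∑ i, ‖v τ i‖^2 with hQ
  set R : ℝ := ∑ τ, ∑ τ' ∈ univ.erase τ, ⟪s τ, s τ'⟫_ℝ with hR
  have key : ∑ σ : Fin n → Fin m, ‖∑ τ, v τ (σ τ)‖^2
      = (m:ℝ)^(n-1) * Q + (m:ℝ)^(n-2) * R := by
    have expand : ∀ σ : Fin n → Fin m, ‖∑ τ, v τ (σ τ)‖^2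
        = ∑ τ, ∑ τ', ⟪v τ (σ τ), v τ' (σ τ')⟫_ℝ := by
      intro σ
      rw [← real_inner_self_eq_norm_sq, sum_inner]
      exact Finset.sum_congr rfl fun τ _ => inner_sum _ _ _
    rw [Finset.sum_congr rfl fun σ _ => expand σ, Finset.sum_comm]
    have swap2 : ∀ τ : Fin n, ∑ σ : Fin n → Fin m, ∑ τ', ⟪v τ (σ τ), v τ' (σ τ')⟫_ℝ
        = ∑ τ', ∑ σ : Fin n → Fin m, ⟪v τ (σ τ), v τ' (σ τ')⟫_ℝ :=
      fun τ => Finset.sum_comm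
    rw [Finset.sum_congr rfl fun τ _ => swap2 τ]
    have diag : ∀ τ : Fin n, ∑ σ : Fin n → Fin m, ⟪v τ (σ τ), v τ (σ τ)⟫_ℝ
        = (m:ℝ)^(n-1) * ∑ i, ‖v τ i‖^2 := by
      intro τ
      have := sum_fun_eval' (fun i => ‖v τ i‖^2) τ
      rw [← this]
      exact Finset.sum_congr rfl fun σ _ => real_inner_self_eq_norm_sq _
    have offdiag : ∀ τ τ' : Fin n, τ' ≠ τ →
        ∑ σ : Fin n → Fin m, ⟪v τ (σ τ), v τ' (σ τ')⟫_ℝ = (m:ℝ)^(n-2) * ⟪s τ, s τ'⟫_ℝ := by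
      intro τ τ' hne
      have coord : ∀ σ : Fin n → Fin m, ⟪v τ (σ τ), v τ' (σ τ')⟫_ℝ
          = ∑ c, v τ (σ τ) c * v τ' (σ τ') c := by
        intro σ
        simp [PiLp.inner_apply, RCLike.inner_apply, mul_comm]
      rw [Finset.sum_congr rfl fun σ _ => coord σ, Finset.sum_comm]
      have percoord : ∀ c : Fin d, ∑ σ : Fin n → Fin m, v τ (σ τ) c * v τ' (σ τ') c
          = (m:ℝ)^(n-2) * ((∑ i, v τ i c) * (∑ j, v τ' j c)) :=
        fun c => sum_fun_eval₂' (fun i => v τ i c) (fun j => v τ' j c) τ τ' (Ne.symm hne)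
      rw [Finset.sum_congr rfl fun c _ => percoord c, ← Finset.mul_sum]
      congr 1
      rw [PiLp.inner_apply]
      refine Finset.sum_congr rfl fun c _ => ?_
      have ha : ∀ (w : Fin m → EuclideanSpace ℝ (Fin d)), (∑ i, w i) c = ∑ i, w i c :=
        fun w => by simp [WithLp.ofLp_sum]
      simp only [hs, ha, RCLike.inner_apply, conj_trivial]
      ring
    calc ∑ τ, ∑ τ', ∑ σ : Fin n → Fin m, ⟪v τ (σ τ), v τ' (σ τ')⟫_ℝ
        = ∑ τ, ((m:ℝ)^(n-1) * ∑ i, ‖v τ i‖^2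
            + ∑ τ' ∈ univ.erase τ, (m:ℝ)^(n-2) * ⟪s τ, s τ'⟫_ℝ) := by
          refine Finset.sum_congr rfl fun τ _ => ?_
          rw [← Finset.add_sum_erase _ _ (mem_univ τ), diag τ]
          congr 1
          exact Finset.sum_congr rfl fun τ' hτ' => offdiag τ τ' (Finset.mem_erase.mp hτ').1
      _ = (m:ℝ)^(n-1) * Q + (m:ℝ)^(n-2) * R := by
          rw [Finset.sum_add_distrib, ← Finset.mul_sum]
          congr 1
          rw [Finset.mul_sum]
          exact Finset.sum_congr rfl fun τ _ => (Finset.mul_sum _ _ _).symm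
  have hRle : R ≤ ‖∑ τ, s τ‖^2 := by
    have hnorm : ‖∑ τ, s τ‖^2 = ∑ τ, (‖s τ‖^2 + ∑ τ' ∈ univ.erase τ, ⟪s τ, s τ'⟫_ℝ) := by
      rw [← real_inner_self_eq_norm_sq, sum_inner]
      refine Finset.sum_congr rfl fun τ _ => ?_
      rw [inner_sum, ← Finset.add_sum_erase _ _ (mem_univ τ), real_inner_self_eq_norm_sq]
    rw [hnorm, Finset.sum_add_distrib, ← hR]
    have : (0:ℝ) ≤ ∑ τ, ‖s τ‖^2 := Finset.sum_nonneg fun τ _ => sq_nonneg _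
    linarith
  have hsum : ∑ τ, s τ = ∑ τ, ∑ i, v τ i := rfl
  have hSnorm : ‖(1/(m:ℝ)) • ∑ τ, ∑ i, v τ i‖^2 = (1/(m:ℝ)^2) * ‖∑ τ, s τ‖^2 := by
    rw [← hsum, norm_smul, mul_pow, Real.norm_eq_abs, abs_of_pos (by positivity : (0:ℝ) < 1/m)]
    ring
  rw [key, hSnorm]
  rcases eq_or_lt_of_le (Nat.one_le_iff_ne_zero.mpr (Nat.pos_iff_ne_zero.mp hn)) with h1 | h2
  · have hn1 : n = 1 := h1.symm
    subst hn1
    have hR0 : R = 0 := by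
      rw [hR]
      refine Finset.sum_eq_zero fun τ _ => ?_
      have : (univ : Finset (Fin 1)).erase τ = ∅ := by
        apply Finset.eq_empty_of_forall_notMem
        intro x hx
        exact (Finset.mem_erase.mp hx).1 (Subsingleton.elim x τ)
      rw [this, Finset.sum_empty]
    rw [hR0]
    have : (1 / (m:ℝ)^1) * ((m:ℝ)^(1-1) * Q + (m:ℝ)^(1-2) * 0) = (1/(m:ℝ)) * Q := by
      norm_num
    rw [this]
    nlinarith [sq_nonneg ‖∑ τ, s τ‖, hmR]
  · have hn2 : 2 ≤ n := h2
    have hpow1 : (m:ℝ)^n = (m:ℝ)^(n-1) * m := by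
      rw [← pow_succ]; congr 1; omega
    have hpow2 : (m:ℝ)^n = (m:ℝ)^(n-2) * m^2 := by
      rw [← pow_add]; congr 1; omega
    have e1 : (1/(m:ℝ)^n) * ((m:ℝ)^(n-1) * Q) = (1/(m:ℝ)) * Q := by
      rw [hpow1]; field_simp
    have e2 : (1/(m:ℝ)^n) * ((m:ℝ)^(n-2) * R) = (1/(m:ℝ)^2) * R := by
      rw [hpow2]; field_simp
    have hc : (0:ℝ) ≤ 1/(m:ℝ)^2 := by positivity
    calc (1/(m:ℝ)^n) * ((m:ℝ)^(n-1) * Q + (m:ℝ)^(n-2) * R)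
        = (1/(m:ℝ)) * Q + (1/(m:ℝ)^2) * R := by rw [mul_add, e1, e2]
      _ ≤ (1/(m:ℝ)) * Q + (1/(m:ℝ)^2) * ‖∑ τ, s τ‖^2 := by
          have := mul_le_mul_of_nonneg_left hRle hc
          linarith
      _ = (1/(m:ℝ)^2) * ‖∑ τ, s τ‖^2 + (1/(m:ℝ)) * Q := by ring

/-- If additionally `f` is `L_f`-smooth, the expected squared norm of the averaged
stochastic gradient difference (expectation over independent uniform indices
`σ : Fin n → Fin m`) is bounded by `4(L_f + L/n)[P(x)−P(x*)] + 4(L_f + L/n)[P(w)−P(x*)]`. -/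
theorem expected_sq_avg_grad_diff_bound {d m n : ℕ} (hm : 0 < m) (hn : 0 < n)
    (L Lf : ℝ) (hL : 0 < L) (hLf : 0 < Lf)
    (f : Fin n → Fin m → EuclideanSpace ℝ (Fin d) → ℝ)
    (g : Fin n → Fin m → EuclideanSpace ℝ (Fin d) → EuclideanSpace ℝ (Fin d))
    (hconv : ∀ τ i, ConvexOn ℝ Set.univ (f τ i))
    (hgrad : ∀ τ i x, HasGradientAt (f τ i) (g τ i x) x)
    (hlip : ∀ τ i, LipschitzWith (Real.toNNReal L) (g τ i))
    (F : EuclideanSpace ℝ (Fin d) → ℝ)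
    (hF : ∀ y, F y = (1 / ((n : ℝ) * m)) * ∑ τ, ∑ i, f τ i y)
    (gF : EuclideanSpace ℝ (Fin d) → EuclideanSpace ℝ (Fin d))
    (hgradF : ∀ x, HasGradientAt F (gF x) x)
    (hlipF : LipschitzWith (Real.toNNReal Lf) gF)
    (ψ : EuclideanSpace ℝ (Fin d) → ℝ) (hψ : ConvexOn ℝ Set.univ ψ)
    (P : EuclideanSpace ℝ (Fin d) → ℝ) (hP : ∀ y, P y = F y + ψ y)
    (xstar : EuclideanSpace ℝ (Fin d)) (hmin : ∀ y, P xstar ≤ P y)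
    (xk wk : EuclideanSpace ℝ (Fin d)) :
    (1 / (m : ℝ) ^ n) * ∑ σ : Fin n → Fin m,
        ‖(1 / (n : ℝ)) • ∑ τ, (g τ (σ τ) xk - g τ (σ τ) wk)‖ ^ 2 ≤
      4 * (Lf + L / n) * (P xk - P xstar) + 4 * (Lf + L / n) * (P wk - P xstar) := by
  classical
  have hnR : (0:ℝ) < n := by exact_mod_cast hn
  have hmR : (0:ℝ) < m := by exact_mod_cast hm
  set c : ℝ := 1 / ((n : ℝ) * m) with hc
  -- gradient identification
  have hgFeq : ∀ x, gF x = c • ∑ τ, ∑ i, g τ i x := by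
    intro x
    have h2 : HasFDerivAt (fun y => c * ∑ τ, ∑ i, f τ i y)
        (c • ∑ τ, ∑ i, (InnerProductSpace.toDual ℝ (EuclideanSpace ℝ (Fin d)) (g τ i x))) x := by
      refine HasFDerivAt.const_mul ?_ c
      refine HasFDerivAt.fun_sum fun τ _ => ?_
      exact HasFDerivAt.fun_sum fun i _ => (hgrad τ i x).hasFDerivAt
    have h3 : (fun y => c * ∑ τ, ∑ i, f τ i y) = F := by
      funext y; rw [hF y]
    rw [h3] at h2
    have h4 : HasGradientAt F (c • ∑ τ, ∑ i, g τ i x) x := by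
      rw [hasGradientAt_iff_hasFDerivAt]
      refine h2.congr_fderiv ?_
      simp [map_smulₛₗ, map_sum]
    exact (hgradF x).unique h4
  have hsumg : ∀ y, ∑ τ, ∑ i, g τ i y = ((n:ℝ)*m) • gF y := by
    intro y
    rw [hgFeq y, smul_smul]
    have : ((n:ℝ)*m) * c = 1 := by rw [hc]; field_simp
    rw [this, one_smul]
  have hsumf : ∀ y, ∑ τ, ∑ i, f τ i y = ((n:ℝ)*m) * F y := by
    intro y; rw [hF y, hc]
    field_simp
  -- F convex
  have hFconv : ConvexOn ℝ Set.univ F := by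
    have h1 : ConvexOn ℝ Set.univ (fun y => ∑ τ, ∑ i, f τ i y) :=
      convexOn_finset_sum' univ (fun τ y => ∑ i, f τ i y)
        (fun τ _ => convexOn_finset_sum' univ (fun i => f τ i) (fun i _ => hconv τ i))
    have h2 := h1.smul (c := c) (by positivity)
    have : (fun y => c • (∑ τ, ∑ i, f τ i y)) = F := by
      funext y; rw [hF y, hc]; simp [smul_eq_mul]
    rwa [this] at h2
  have hminFψ : ∀ y, F xstar + ψ xstar ≤ F y + ψ y := by
    intro y
    have := hmin y
    rwa [hP y, hP xstar] at this
  have hpos : (0:ℝ) < Lf + L / n := by positivity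
  -- uniform claim for one point
  have claim : ∀ y : EuclideanSpace ℝ (Fin d),
      (1 / (m:ℝ)^n) * ∑ σ : Fin n → Fin m,
          ‖(1 / (n:ℝ)) • ∑ τ, (g τ (σ τ) y - g τ (σ τ) xstar)‖^2 ≤
        2 * (Lf + L / n) * (P y - P xstar) := by
    intro y
    set B : ℝ := F y - F xstar - ⟪gF xstar, y - xstar⟫_ℝ with hB
    have hBle : B ≤ P y - P xstar := by
      have := opt_ineq' F ψ gF hgradF hψ xstar hminFψ y
      rw [hP y, hP xstar, hB]
      linarith
    have hcoF : ‖gF y - gF xstar‖^2 ≤ 2 * Lf * B :=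
      cocoercive' F gF Lf hLf hFconv hgradF hlipF y xstar
    have hV : ∑ τ, ∑ i, ‖g τ i y - g τ i xstar‖^2 ≤ 2*L*(((n:ℝ)*m) * B) := by
      have hper : ∀ τ i, ‖g τ i y - g τ i xstar‖^2 ≤
          2*L*(f τ i y - f τ i xstar - ⟪g τ i xstar, y - xstar⟫_ℝ) :=
        fun τ i => cocoercive' (f τ i) (g τ i) L hL (hconv τ i) (hgrad τ i) (hlip τ i) y xstar
      calc ∑ τ, ∑ i, ‖g τ i y - g τ i xstar‖^2
          ≤ ∑ τ, ∑ i, 2*L*(f τ i y - f τ i xstar - ⟪g τ i xstar, y - xstar⟫_ℝ) :=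
            Finset.sum_le_sum fun τ _ => Finset.sum_le_sum fun i _ => hper τ i
        _ = 2*L*((∑ τ, ∑ i, f τ i y) - (∑ τ, ∑ i, f τ i xstar)
              - ⟪∑ τ, ∑ i, g τ i xstar, y - xstar⟫_ℝ) := by
            rw [sum_inner]
            have : ∀ τ : Fin n, ⟪∑ i, g τ i xstar, y - xstar⟫_ℝ
                = ∑ i, ⟪g τ i xstar, y - xstar⟫_ℝ := fun τ => sum_inner _ _ _
            rw [Finset.sum_congr rfl fun τ _ => this τ]
            rw [← Finset.sum_sub_distrib, ← Finset.sum_sub_distrib, Finset.mul_sum]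
            refine Finset.sum_congr rfl fun τ _ => ?_
            rw [← Finset.sum_sub_distrib, ← Finset.sum_sub_distrib, Finset.mul_sum]
        _ = 2*L*(((n:ℝ)*m) * B) := by
            rw [hsumf y, hsumf xstar, hsumg xstar, real_inner_smul_left, hB]
            ring
    set vv : Fin n → Fin m → EuclideanSpace ℝ (Fin d) :=
      fun τ i => g τ i y - g τ i xstar with hvv
    have hEb := exp_sq_sum_bound' hm hn vv
    -- identify the mean term
    have hsv : ∑ τ, ∑ i, vv τ i = ((n:ℝ)*m) • (gF y - gF xstar) := by
      rw [hvv]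
      simp only [Finset.sum_sub_distrib]
      rw [hsumg y, hsumg xstar, smul_sub]
    have hmean : ‖(1/(m:ℝ)) • ∑ τ, ∑ i, vv τ i‖^2 = (n:ℝ)^2 * ‖gF y - gF xstar‖^2 := by
      rw [hsv, smul_smul]
      have h5 : (1/(m:ℝ)) * ((n:ℝ)*m) = (n:ℝ) := by field_simp
      rw [h5, norm_smul, Real.norm_eq_abs, abs_of_pos hnR, mul_pow]
    -- assemble the claim
    have hscale : ∀ σ : Fin n → Fin m,
        ‖(1 / (n:ℝ)) • ∑ τ, (g τ (σ τ) y - g τ (σ τ) xstar)‖^2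
          = (1/(n:ℝ)^2) * ‖∑ τ, vv τ (σ τ)‖^2 := by
      intro σ
      rw [norm_smul, Real.norm_eq_abs, abs_of_pos (by positivity : (0:ℝ) < 1/n), mul_pow]
      ring_nf
      rfl
    calc (1 / (m:ℝ)^n) * ∑ σ : Fin n → Fin m,
            ‖(1 / (n:ℝ)) • ∑ τ, (g τ (σ τ) y - g τ (σ τ) xstar)‖^2
        = (1/(n:ℝ)^2) * ((1/(m:ℝ)^n) * ∑ σ : Fin n → Fin m, ‖∑ τ, vv τ (σ τ)‖^2) := by
          rw [Finset.sum_congr rfl fun σ _ => hscale σ, ← Finset.mul_sum]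
          ring
      _ ≤ (1/(n:ℝ)^2) * (‖(1/(m:ℝ)) • ∑ τ, ∑ i, vv τ i‖^2
            + (1/(m:ℝ)) * ∑ τ, ∑ i, ‖vv τ i‖^2) :=
          mul_le_mul_of_nonneg_left hEb (by positivity)
      _ ≤ (1/(n:ℝ)^2) * ((n:ℝ)^2 * (2 * Lf * B) + (1/(m:ℝ)) * (2*L*(((n:ℝ)*m) * B))) := by
          apply mul_le_mul_of_nonneg_left _ (by positivity : (0:ℝ) ≤ 1/(n:ℝ)^2)
          have t1 : ‖(1/(m:ℝ)) • ∑ τ, ∑ i, vv τ i‖^2 ≤ (n:ℝ)^2 * (2 * Lf * B) := by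
            rw [hmean]
            exact mul_le_mul_of_nonneg_left hcoF (by positivity)
          have t2 : (1/(m:ℝ)) * ∑ τ, ∑ i, ‖vv τ i‖^2 ≤ (1/(m:ℝ)) * (2*L*(((n:ℝ)*m) * B)) :=
            mul_le_mul_of_nonneg_left hV (by positivity)
          linarith
      _ = 2 * (Lf + L / n) * B := by
          field_simp
      _ ≤ 2 * (Lf + L / n) * (P y - P xstar) := by
          apply mul_le_mul_of_nonneg_left hBle (by positivity)
  -- combine the two points
  have hpoint : ∀ σ : Fin n → Fin m,
      ‖(1 / (n:ℝ)) • ∑ τ, (g τ (σ τ) xk - g τ (σ τ) wk)‖^2 ≤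
        2 * ‖(1 / (n:ℝ)) • ∑ τ, (g τ (σ τ) xk - g τ (σ τ) xstar)‖^2
        + 2 * ‖(1 / (n:ℝ)) • ∑ τ, (g τ (σ τ) wk - g τ (σ τ) xstar)‖^2 := by
    intro σ
    set A := (1 / (n:ℝ)) • ∑ τ, (g τ (σ τ) xk - g τ (σ τ) xstar) with hA
    set Bv := (1 / (n:ℝ)) • ∑ τ, (g τ (σ τ) wk - g τ (σ τ) xstar) with hBv
    have hAB : (1 / (n:ℝ)) • ∑ τ, (g τ (σ τ) xk - g τ (σ τ) wk) = A - Bv := by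
      rw [hA, hBv, ← smul_sub]
      congr 1
      rw [← Finset.sum_sub_distrib]
      refine Finset.sum_congr rfl fun τ _ => ?_
      abel
    rw [hAB]
    have h1 : ‖A - Bv‖ ≤ ‖A‖ + ‖Bv‖ := norm_sub_le _ _
    nlinarith [norm_nonneg A, norm_nonneg Bv, norm_nonneg (A - Bv), sq_nonneg (‖A‖ - ‖Bv‖)]
  calc (1 / (m : ℝ) ^ n) * ∑ σ : Fin n → Fin m,
          ‖(1 / (n : ℝ)) • ∑ τ, (g τ (σ τ) xk - g τ (σ τ) wk)‖ ^ 2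
      ≤ (1 / (m : ℝ) ^ n) * ∑ σ : Fin n → Fin m,
          (2 * ‖(1 / (n:ℝ)) • ∑ τ, (g τ (σ τ) xk - g τ (σ τ) xstar)‖^2
          + 2 * ‖(1 / (n:ℝ)) • ∑ τ, (g τ (σ τ) wk - g τ (σ τ) xstar)‖^2) := by
        apply mul_le_mul_of_nonneg_left _ (by positivity : (0:ℝ) ≤ 1/(m:ℝ)^n)
        exact Finset.sum_le_sum fun σ _ => hpoint σ
    _ = 2 * ((1 / (m:ℝ)^n) * ∑ σ : Fin n → Fin m,
            ‖(1 / (n:ℝ)) • ∑ τ, (g τ (σ τ) xk - g τ (σ τ) xstar)‖^2)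
        + 2 * ((1 / (m:ℝ)^n) * ∑ σ : Fin n → Fin m,
            ‖(1 / (n:ℝ)) • ∑ τ, (g τ (σ τ) wk - g τ (σ τ) xstar)‖^2) := by
        rw [Finset.sum_add_distrib, ← Finset.mul_sum, ← Finset.mul_sum]
        ring
    _ ≤ 2 * (2 * (Lf + L / n) * (P xk - P xstar)) + 2 * (2 * (Lf + L / n) * (P wk - P xstar)) := by
        have h1 := claim xk
        have h2 := claim wk
        linarith
    _ = 4 * (Lf + L / n) * (P xk - P xstar) + 4 * (Lf + L / n) * (P wk - P xstar) := by ring
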